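/- Let R be a Noetherian ring, I an ideal, M a finitely generated R-module, f ∈ I^s \\ I^{s+1}. If f is superficial for M with respect to I (i.e., there is n₀ such that for all n ≥ n₀ the multiplication map by the initial form f̄ from I^{n-s}M/I^{n-s+1}M to I^nM/I^{n+1}M is injective), then for all sufficiently large n one has the equality of submodules of I^nM: (I^n M ∩ f M) + I^{n+1} M = f • I^{n-s} M + I^{n+1} M. -/
import Mathlib


open Submodule

section GradedInfra

variable {R : Type*} [CommRing R] (I : Ideal R) (M : Type*) [AddCommGroup M] [Module R M]

/-- The `n`-th graded piece `I^n M / I^{n+1} M` of the associated graded module `G_I(M)`. -/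
noncomputable abbrev gradedPiece (n : ℕ) : Type _ :=
  ↥(I ^ n • (⊤ : Submodule R M)) ⧸
    (Submodule.comap (I ^ n • (⊤ : Submodule R M)).subtype (I ^ (n + 1) • (⊤ : Submodule R M)))

/-- `f` is superficial of degree `s` for `M` with respect to `I`: for all large `n`,
multiplication by the initial form of `f` is injective `G_I(M)_n → G_I(M)_{n+s}`. -/
def IsSuperficial (f : R) (s : ℕ) : Prop :=
  ∃ n₀ : ℕ, ∀ n ≥ n₀, ∀ x ∈ (I ^ n • (⊤ : Submodule R M)),
    f • x ∈ (I ^ (n + s + 1) • (⊤ : Submodule R M)) → x ∈ I ^ (n + 1) • (⊤ : Submodule R M)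

variable {I M} in
theorem smul_mem_pow_smul {f : R} {s : ℕ} (hf : f ∈ I ^ s) {n : ℕ} {x : M}
    (hx : x ∈ I ^ n • (⊤ : Submodule R M)) : f • x ∈ I ^ (n + s) • (⊤ : Submodule R M) := by
  have h1 : f • x ∈ I ^ s • (I ^ n • (⊤ : Submodule R M)) := Submodule.smul_mem_smul hf hx
  rwa [← mul_smul, ← pow_add, add_comm s n] at h1

/-- Multiplication by the initial form of `f ∈ I^s`, as a map of graded pieces
`G_I(M)_n → G_I(M)_{n+s}`. -/
noncomputable def gradedMulMap {f : R} {s : ℕ} (hf : f ∈ I ^ s) (n : ℕ) :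
    gradedPiece I M n →ₗ[R] gradedPiece I M (n + s) :=
  Submodule.mapQ _ _
    ((LinearMap.lsmul R M f).restrict (p := I ^ n • ⊤) (q := I ^ (n + s) • ⊤)
      (fun _ hx => smul_mem_pow_smul hf hx))
    (fun _ hx => by
      have h2 := smul_mem_pow_smul (n := n + 1) hf hx
      rwa [show n + 1 + s = n + s + 1 by omega] at h2)

variable {I M} in
theorem mkQ_mem_pow_smul (N : Submodule R M) {n : ℕ} {x : M}
    (hx : x ∈ I ^ n • (⊤ : Submodule R M)) :
    N.mkQ x ∈ I ^ n • (⊤ : Submodule R (M ⧸ N)) := by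
  have h : Submodule.map N.mkQ (I ^ n • (⊤ : Submodule R M))
      = I ^ n • (⊤ : Submodule R (M ⧸ N)) := by
    rw [Submodule.map_smul'', Submodule.map_top, Submodule.range_mkQ]
  exact h ▸ Submodule.mem_map_of_mem hx

/-- The map `I^n M → G_I(M/N)_n` induced by the quotient map `M → M/N`. -/
noncomputable def toGradedQuot (N : Submodule R M) (n : ℕ) :
    ↥(I ^ n • (⊤ : Submodule R M)) →ₗ[R] gradedPiece I (M ⧸ N) n :=
  (Submodule.comap (I ^ n • (⊤ : Submodule R (M ⧸ N))).subtype
      (I ^ (n + 1) • (⊤ : Submodule R (M ⧸ N)))).mkQ.comp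
    (N.mkQ.restrict (p := I ^ n • ⊤) (q := I ^ n • ⊤) (fun _ hx => mkQ_mem_pow_smul N hx))

/-- The map of graded pieces `G_I(M)_n → G_I(M/N)_n` induced by the quotient `M → M/N`. -/
noncomputable def gradedQuotMap (N : Submodule R M) (n : ℕ) :
    gradedPiece I M n →ₗ[R] gradedPiece I (M ⧸ N) n :=
  Submodule.liftQ _ (toGradedQuot I M N n)
    (fun x hx => by
      have h : N.mkQ x.1 ∈ I ^ (n + 1) • (⊤ : Submodule R (M ⧸ N)) := mkQ_mem_pow_smul N hx
      exact (Submodule.Quotient.mk_eq_zero _).mpr h)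

end GradedInfra

section ULiftTransfer

universe u v

variable {R : Type u} {M : Type v} [CommRing R] [AddCommGroup M] [Module R M]

/-- Lift a submodule of `M` to a submodule of `ULift M` over `ULift R`. -/
private def liftSub (P : Submodule R M) : Submodule (ULift.{v} R) (ULift.{u} M) where
  carrier := ULift.down ⁻¹' (P : Set M)
  add_mem' := fun ha hb => P.add_mem ha hb
  zero_mem' := P.zero_mem
  smul_mem' := fun r x hx => P.smul_mem r.down hx

private lemma mem_liftSub {P : Submodule R M} {x : ULift.{u} M} :
    x ∈ liftSub P ↔ x.down ∈ P := Iff.rfl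

private lemma liftSub_inj {P Q : Submodule R M} (h : liftSub P = liftSub Q) : P = Q := by
  ext m
  have := SetLike.ext_iff.mp h (ULift.up m)
  exact this

private lemma liftSub_inf (P Q : Submodule R M) :
    liftSub (P ⊓ Q) = liftSub P ⊓ liftSub Q := by
  ext x
  simp [mem_liftSub]

private lemma liftSub_top : liftSub (⊤ : Submodule R M) = ⊤ := by
  ext x; simp [mem_liftSub]

private lemma liftSub_smul (J : Ideal R) (P : Submodule R M) :
    liftSub (J • P) =
      (J.comap (ULift.ringEquiv : ULift.{v} R ≃+* R)) • liftSub P := by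
  apply le_antisymm
  · intro x hx
    have hx' : x.down ∈ J • P := hx
    have key : ∀ y ∈ J • P,
        ULift.up.{u} y ∈ (J.comap (ULift.ringEquiv : ULift.{v} R ≃+* R)) • liftSub P := by
      intro y hy
      refine Submodule.smul_induction_on hy ?_ ?_
      · intro r hr p hp
        exact Submodule.smul_mem_smul
          (show ULift.up.{v} r ∈ J.comap (ULift.ringEquiv : ULift.{v} R ≃+* R) from hr)
          (show ULift.up.{u} p ∈ liftSub P from hp)
      · intro a b ha hb
        exact Submodule.add_mem _ ha hb
    exact key x.down hx'
  · refine Submodule.smul_le.mpr fun r hr x hx => ?_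
    exact Submodule.smul_mem_smul (show r.down ∈ J from hr) (mem_liftSub.mp hx)

private lemma module_finite_ulift [Module.Finite R M] :
    Module.Finite (ULift.{v} R) (ULift.{u} M) := by
  classical
  obtain ⟨S, hS⟩ := Module.Finite.fg_top (R := R) (M := M)
  refine ⟨⟨S.image ULift.up, ?_⟩⟩
  rw [eq_top_iff]
  rintro x -
  have hx : x.down ∈ Submodule.span R (S : Set M) := by rw [hS]; trivial
  have key : ∀ y ∈ Submodule.span R (S : Set M),
      ULift.up.{u} y ∈ Submodule.span (ULift.{v} R)
        ((S.image ULift.up : Finset (ULift.{u} M)) : Set (ULift.{u} M)) := by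
    intro y hy
    refine Submodule.span_induction ?_ ?_ ?_ ?_ hy
    · intro z hz
      exact Submodule.subset_span
        (by exact_mod_cast Finset.mem_image_of_mem ULift.up (by exact_mod_cast hz))
    · exact Submodule.zero_mem _
    · intro a b _ _ ha hb
      exact Submodule.add_mem _ ha hb
    · intro r y _ hy
      exact Submodule.smul_mem _ (ULift.up r) hy
  exact key x.down hx

/-- **Artin–Rees lemma**, universe-polymorphic version. -/
private theorem artinRees [IsNoetherianRing R] [Module.Finite R M] (I : Ideal R)
    (N : Submodule R M) :
    ∃ k : ℕ, ∀ n ≥ k, I ^ n • (⊤ : Submodule R M) ⊓ N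
      = I ^ (n - k) • (I ^ k • (⊤ : Submodule R M) ⊓ N) := by
  haveI : IsNoetherianRing (ULift.{v} R) :=
    isNoetherianRing_of_ringEquiv R (ULift.ringEquiv : ULift.{v} R ≃+* R).symm
  haveI := module_finite_ulift (R := R) (M := M)
  set e : ULift.{v} R ≃+* R := ULift.ringEquiv
  have hpow : ∀ n : ℕ, (I ^ n).comap e = (I.comap e) ^ n := by
    intro n
    rw [← Ideal.map_symm, ← Ideal.map_symm, Ideal.map_pow]
  obtain ⟨k, hk⟩ := Ideal.exists_pow_inf_eq_pow_smul (I.comap e) (liftSub N)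
  refine ⟨k, fun n hn => ?_⟩
  apply liftSub_inj
  calc liftSub (I ^ n • (⊤ : Submodule R M) ⊓ N)
      = (I.comap e) ^ n • (⊤ : Submodule (ULift.{v} R) (ULift.{u} M)) ⊓ liftSub N := by
        rw [liftSub_inf, liftSub_smul, liftSub_top, hpow]
    _ = (I.comap e) ^ (n - k) • ((I.comap e) ^ k •
          (⊤ : Submodule (ULift.{v} R) (ULift.{u} M)) ⊓ liftSub N) := hk n hn
    _ = liftSub (I ^ (n - k) • (I ^ k • (⊤ : Submodule R M) ⊓ N)) := by
        rw [liftSub_smul, liftSub_inf, liftSub_smul, liftSub_top, hpow, hpow]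

end ULiftTransfer

/-- If `f ∈ I^s \ I^{s+1}` is superficial for `M` w.r.t. `I`, then for all large `n`
(writing the degree as `n + s`): `(I^{n+s}M ∩ fM) + I^{n+s+1}M = f·I^nM + I^{n+s+1}M`. -/
theorem stmt_7 {R M : Type*} [CommRing R] [IsNoetherianRing R] [AddCommGroup M] [Module R M]
    [Module.Finite R M] (I : Ideal R) (f : R) (s : ℕ) (hf : f ∈ I ^ s) (hf' : f ∉ I ^ (s + 1))
    (hsup : IsSuperficial I M f s) :
    ∃ n₀ : ℕ, ∀ n ≥ n₀,
      ((I ^ (n + s) • (⊤ : Submodule R M)) ⊓ (Ideal.span {f} • (⊤ : Submodule R M))) ⊔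
          I ^ (n + s + 1) • (⊤ : Submodule R M) =
        (Ideal.span {f} • (I ^ n • (⊤ : Submodule R M))) ⊔
          I ^ (n + s + 1) • (⊤ : Submodule R M) := by
  classical
  obtain ⟨n₀s, hn₀s⟩ := hsup
  obtain ⟨c, hc⟩ := artinRees I (Ideal.span {f} • (⊤ : Submodule R M))
  refine ⟨n₀s + c, fun n hn => ?_⟩
  have key : ∀ d j, n₀s ≤ j → ∀ m : M, m ∈ I ^ j • (⊤ : Submodule R M) →
      f • m ∈ I ^ (n + s) • (⊤ : Submodule R M) → n ≤ j + d →
      m ∈ I ^ n • (⊤ : Submodule R M) := by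
    intro d
    induction d with
    | zero =>
      intro j hj m hm hfm hle
      exact Submodule.smul_mono_left (Ideal.pow_le_pow_right (by omega)) hm
    | succ d ih =>
      intro j hj m hm hfm hle
      by_cases h : n ≤ j
      · exact Submodule.smul_mono_left (Ideal.pow_le_pow_right h) hm
      · have hfm' : f • m ∈ I ^ (j + s + 1) • (⊤ : Submodule R M) :=
          Submodule.smul_mono_left (Ideal.pow_le_pow_right (by omega)) hfm
        exact ih (j + 1) (by omega) m (hn₀s j hj m hm hfm') hfm (by omega)
  apply le_antisymm
  · refine sup_le ?_ le_sup_right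
    intro x hx
    have hx' : x ∈ I ^ (n + s - c) • (I ^ c • (⊤ : Submodule R M) ⊓
        Ideal.span {f} • (⊤ : Submodule R M)) := by
      rw [← hc (n + s) (by omega)]
      exact hx
    have hx2 : x ∈ Ideal.span {f} • (I ^ (n + s - c) • (⊤ : Submodule R M)) := by
      have h1 : I ^ (n + s - c) • (I ^ c • (⊤ : Submodule R M) ⊓
          Ideal.span {f} • (⊤ : Submodule R M)) ≤
          I ^ (n + s - c) • (Ideal.span {f} • (⊤ : Submodule R M)) :=
        Submodule.smul_mono le_rfl inf_le_right
      have h2 : I ^ (n + s - c) • (Ideal.span {f} • (⊤ : Submodule R M)) =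
          Ideal.span {f} • (I ^ (n + s - c) • (⊤ : Submodule R M)) := by
        rw [← mul_smul, mul_comm, mul_smul]
      exact h2 ▸ h1 hx'
    rw [Submodule.ideal_span_singleton_smul] at hx2
    rw [← SetLike.mem_coe, Submodule.coe_pointwise_smul] at hx2
    obtain ⟨m, hm, rfl⟩ := hx2
    have hfm : f • m ∈ I ^ (n + s) • (⊤ : Submodule R M) := by
      have := hx.1
      simpa using this
    have hmn : m ∈ I ^ n • (⊤ : Submodule R M) :=
      key (n + s) (n + s - c) (by omega) m hm hfm (by omega)
    exact Submodule.mem_sup_left (Submodule.smul_mem_smul (Ideal.mem_span_singleton_self f) hmn)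
  · refine sup_le ?_ le_sup_right
    refine le_trans ?_ le_sup_left
    refine le_inf ?_ (Submodule.smul_mono le_rfl le_top)
    refine Submodule.smul_le.mpr fun r hr m hm => ?_
    rw [Ideal.mem_span_singleton] at hr
    obtain ⟨t, rfl⟩ := hr
    have : f • (t • m) ∈ I ^ (n + s) • (⊤ : Submodule R M) := by
      have := smul_mem_pow_smul (I := I) (M := M) hf
        (Submodule.smul_mem _ t hm)
      exact this
    rwa [← mul_smul] at this
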